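/- Let K be a pure, strongly connected d-dimensional simplicial complex. If the 1-skeleton of K admits a proper (d+1)-coloring, then this coloring is unique up to a permutation of the colors. Moreover, no proper coloring of the 1-skeleton of K with fewer than d+1 colors exists. -/

import Mathlib

open Finset

variable {V : Type*} [DecidableEq V]

/-- A (finite abstract) simplicial complex: faces are nonempty and closed under
nonempty subsets. -/
def IsComplex (K : Finset (Finset V)) : Prop :=
  ∀ f ∈ K, f.Nonempty ∧ ∀ g, g ⊆ f → g.Nonempty → g ∈ K

/-- `K` is pure of dimension `d`: every face is contained in a face with `d+1` vertices. -/
def IsPure (K : Finset (Finset V)) (d : ℕ) : Prop :=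
  ∀ f ∈ K, ∃ σ ∈ K, f ⊆ σ ∧ σ.card = d + 1

/-- A facet of a pure `d`-complex: a face with `d+1` vertices. -/
def IsFacet (K : Finset (Finset V)) (d : ℕ) (σ : Finset V) : Prop :=
  σ ∈ K ∧ σ.card = d + 1

/-- Two facets are neighboring if they share a ridge (codimension-1 face). -/
def Neighboring (K : Finset (Finset V)) (d : ℕ) (σ τ : Finset V) : Prop :=
  IsFacet K d σ ∧ IsFacet K d τ ∧ (σ ∩ τ).card = d

/-- The perspectivity `⟨σ,τ⟩` between neighboring facets: it fixes the common
vertices and sends the vertex `σ \ τ` to the vertex `τ \ σ`. -/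
noncomputable def persp (σ τ : Finset V) (v : V) : V :=
  if v ∈ τ then v else if h : (τ \ σ).Nonempty then h.choose else v

/-- The projectivity along a facet path: the composition of consecutive perspectivities. -/
noncomputable def projAlong : List (Finset V) → V → V
  | [] => id
  | [_] => id
  | σ :: τ :: rest => fun v => projAlong (τ :: rest) (persp σ τ v)

/-- A facet path: a nonempty sequence of facets in which consecutive facets share a ridge. -/
def IsFacetPath (K : Finset (Finset V)) (d : ℕ) (γ : List (Finset V)) : Prop :=
  γ ≠ [] ∧ (∀ σ ∈ γ, IsFacet K d σ) ∧ γ.Chain' (fun σ τ => (σ ∩ τ).card = d)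

/-- `K` is strongly connected: any two facets are joined by a facet path. -/
def StronglyConnected (K : Finset (Finset V)) (d : ℕ) : Prop :=
  ∀ σ τ, IsFacet K d σ → IsFacet K d τ →
    ∃ γ, IsFacetPath K d γ ∧ γ.head? = some σ ∧ γ.getLast? = some τ

/-- `K` is locally strongly connected: the star of every face is strongly connected. -/
def LocallyStronglyConnected (K : Finset (Finset V)) (d : ℕ) : Prop :=
  ∀ f ∈ K, ∀ σ τ, IsFacet K d σ → IsFacet K d τ → f ⊆ σ → f ⊆ τ →
    ∃ γ, IsFacetPath K d γ ∧ γ.head? = some σ ∧ γ.getLast? = some τ ∧ ∀ ρ ∈ γ, f ⊆ ρ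

/-- The vertex set of a complex. -/
def vertexSet (K : Finset (Finset V)) : Finset V := K.biUnion id

/-- A proper coloring of the 1-skeleton of `K`: the endpoints of every edge
(2-element face) receive distinct colors. -/
def ProperColoring {α : Type*} (K : Finset (Finset V)) (c : V → α) : Prop :=
  ∀ v w, v ≠ w → ({v, w} : Finset V) ∈ K → c v ≠ c w

/-- A codimension-2 face `f` is odd if its link graph is not 2-colorable (not bipartite). -/
def OddFace (K : Finset (Finset V)) (f : Finset V) : Prop :=
  ¬ ∃ b : V → Bool, ∀ w w', w ∉ f → w' ∉ f → w ≠ w' →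
      f ∪ {w, w'} ∈ K → b w ≠ b w'

/-- Stellar subdivision of the edge `e` of `K` by the new vertex `u`:
faces not containing `e` are kept; every face containing `e` is replaced by the
cones of `u` over the faces of its boundary not containing `e`. -/
def stellarSub (K : Finset (Finset V)) (e : Finset V) (u : V) : Finset (Finset V) :=
  K.filter (fun f => ¬ e ⊆ f) ∪
    (K.filter fun f => e ⊆ f).biUnion fun f =>
      e.biUnion fun x => ((f.erase x).powerset).image fun g => insert u g

/-- `EdgeSubdivSeq K K'` : `K'` is obtained from `K` by a finite sequence of stellar
subdivisions of edges (each subdividing vertex being a fresh vertex). -/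
inductive EdgeSubdivSeq : Finset (Finset V) → Finset (Finset V) → Prop
  | refl (K : Finset (Finset V)) : EdgeSubdivSeq K K
  | step (K L : Finset (Finset V)) (e : Finset V) (u : V) :
      EdgeSubdivSeq K L → e ∈ L → e.card = 2 → u ∉ vertexSet L →
      EdgeSubdivSeq K (stellarSub L e u)

/-- A boundary ridge: a `(d-1)`-dimensional face contained in exactly one facet. -/
def IsBoundaryRidge (K : Finset (Finset V)) (d : ℕ) (g : Finset V) : Prop :=
  g ∈ K ∧ g.card = d ∧ (K.filter fun τ => τ.card = d + 1 ∧ g ⊆ τ).card = 1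

lemma injOn_of_proper {K : Finset (Finset V)} (hK : IsComplex K)
    {α : Type*} {c : V → α} (hc : ProperColoring K c) {σ : Finset V} (hσ : σ ∈ K) :
    Set.InjOn c σ := by
  intro v hv w hw hvw
  by_contra hne
  have hsub : ({v, w} : Finset V) ⊆ σ := by
    intro x hx
    simp only [mem_insert, mem_singleton] at hx
    rcases hx with rfl | rfl
    · exact hv
    · exact hw
  exact hc v w hne ((hK σ hσ).2 _ hsub ⟨v, mem_insert_self _ _⟩) hvw

lemma chain_prop {K : Finset (Finset V)} {d : ℕ} (P : Finset V → Prop)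
    (step : ∀ σ τ, IsFacet K d σ → IsFacet K d τ → (σ ∩ τ).card = d → P σ → P τ) :
    ∀ γ : List (Finset V), (∀ σ ∈ γ, IsFacet K d σ) →
      γ.Chain' (fun σ τ => (σ ∩ τ).card = d) →
      ∀ a b, γ.head? = some a → γ.getLast? = some b → P a → P b
  | [] => by intro _ _ a b h; simp at h
  | [x] => by
      intro _ _ a b ha hb hPa
      simp only [List.head?_cons, Option.some.injEq] at ha
      simp only [List.getLast?_singleton, Option.some.injEq] at hb
      subst ha; subst hb; exact hPa
  | x :: y :: rest => by
      intro hfac hchain a b ha hb hPa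
      simp only [List.head?_cons, Option.some.injEq] at ha
      subst ha
      rw [List.Chain', List.isChain_cons_cons] at hchain
      have hPy : P y :=
        step x y (hfac x (by simp)) (hfac y (by simp)) hchain.1 hPa
      exact chain_prop P step (y :: rest) (fun σ hσ => hfac σ (by simp [hσ]))
        hchain.2 y b (by simp) (by simpa using hb) hPy

/-- A proper `(d+1)`-coloring of a pure, strongly connected `d`-complex is
unique up to a permutation of the colors, and there is no proper coloring with fewer
than `d+1` colors. -/
theorem foldable_coloring_unique
    (K : Finset (Finset V)) (d : ℕ) (hK : IsComplex K) (hpure : IsPure K d)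
    (hconn : StronglyConnected K d) (hne : K.Nonempty) :
    (∀ c₁ c₂ : V → Fin (d + 1), ProperColoring K c₁ → ProperColoring K c₂ →
      ∃ π : Equiv.Perm (Fin (d + 1)), ∀ v ∈ vertexSet K, c₂ v = π (c₁ v)) ∧
    (∀ k, k < d + 1 → ¬ ∃ c : V → Fin k, ProperColoring K c) := by
  -- obtain a facet σ₀
  obtain ⟨f₀, hf₀⟩ := hne
  obtain ⟨σ₀, hσ₀K, -, hσ₀card⟩ := hpure f₀ hf₀
  have hσ₀ : IsFacet K d σ₀ := ⟨hσ₀K, hσ₀card⟩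
  constructor
  · intro c₁ c₂ hc₁ hc₂
    -- bijections from σ₀ to colors
    have hinj : ∀ (c : V → Fin (d + 1)), ProperColoring K c →
        Function.Bijective (fun x : {x // x ∈ σ₀} => c x) := by
      intro c hc
      have hi : Function.Injective (fun x : {x // x ∈ σ₀} => c x) := by
        intro x y h
        exact Subtype.ext (injOn_of_proper hK hc hσ₀K x.2 y.2 h)
      exact (Fintype.bijective_iff_injective_and_card _).2
        ⟨hi, by simp [Fintype.card_coe, hσ₀card]⟩
    set e₁ := Equiv.ofBijective _ (hinj c₁ hc₁) with he₁
    set e₂ := Equiv.ofBijective _ (hinj c₂ hc₂) with he₂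
    refine ⟨e₁.symm.trans e₂, ?_⟩
    set π : Equiv.Perm (Fin (d + 1)) := e₁.symm.trans e₂ with hπ
    set P : Finset V → Prop := fun σ => ∀ v ∈ σ, c₂ v = π (c₁ v) with hP
    -- base case
    have hPσ₀ : P σ₀ := by
      intro v hv
      have h1 : e₁ ⟨v, hv⟩ = c₁ v := rfl
      have : e₁.symm (c₁ v) = ⟨v, hv⟩ := by rw [← h1, Equiv.symm_apply_apply]
      simp only [hπ, Equiv.trans_apply, this]
      rfl
    -- propagation step
    have step : ∀ σ τ, IsFacet K d σ → IsFacet K d τ → (σ ∩ τ).card = d →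
        P σ → P τ := by
      intro σ τ hσ hτ hst hPσ v hvτ
      by_cases hvσ : v ∈ σ
      · exact hPσ v (mem_inter.mp (mem_inter.mpr ⟨hvσ, hvτ⟩)).1
      · have hSτ : σ ∩ τ ⊆ τ := inter_subset_right
        have hinj₁ : Set.InjOn c₁ τ := injOn_of_proper hK hc₁ hτ.1
        have hinj₂ : Set.InjOn c₂ τ := injOn_of_proper hK hc₂ hτ.1
        set A₁ := (σ ∩ τ).image c₁ with hA₁
        set A₂ := (σ ∩ τ).image c₂ with hA₂
        have hA₁card : A₁.card = d := by
          rw [hA₁, card_image_of_injOn (hinj₁.mono (by exact_mod_cast hSτ))]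
          exact hst
        have hA₂eq : A₂ = A₁.image π := by
          rw [hA₁, hA₂, image_image]
          refine image_congr ?_
          intro w hw
          exact hPσ w (mem_inter.mp hw).1
        have hc₁v : c₁ v ∉ A₁ := by
          simp only [hA₁, mem_image, not_exists]
          rintro w ⟨hw, hcw⟩
          exact hvσ (hinj₁ (hSτ hw) hvτ hcw ▸ (mem_inter.mp hw).1)
        have hc₂v : c₂ v ∉ A₂ := by
          simp only [hA₂, mem_image, not_exists]
          rintro w ⟨hw, hcw⟩
          exact hvσ (hinj₂ (hSτ hw) hvτ hcw ▸ (mem_inter.mp hw).1)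
        have hπv : π (c₁ v) ∉ A₂ := by
          rw [hA₂eq]
          simp only [mem_image, not_exists]
          rintro x ⟨hx, hpx⟩
          exact hc₁v (π.injective hpx ▸ hx)
        -- complement of A₂ has one element
        have hA₂card : A₂.card = d := by
          rw [hA₂eq, card_image_of_injective _ π.injective, hA₁card]
        have hcompl : (Finset.univ \ A₂).card = 1 := by
          rw [card_sdiff_of_subset (subset_univ _), hA₂card, card_univ, Fintype.card_fin]
          omega
        have h1 : c₂ v ∈ Finset.univ \ A₂ := by simp [hc₂v]
        have h2 : π (c₁ v) ∈ Finset.univ \ A₂ := by simp [hπv]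
        exact card_le_one.mp (le_of_eq hcompl) _ h1 _ h2
    -- any vertex lies in a facet reachable from σ₀
    intro v hv
    obtain ⟨f, hfK, hvf⟩ := mem_biUnion.mp hv
    obtain ⟨τ, hτK, hfτ, hτcard⟩ := hpure f hfK
    have hτ : IsFacet K d τ := ⟨hτK, hτcard⟩
    obtain ⟨γ, ⟨-, hfac, hchain⟩, hhead, hlast⟩ := hconn σ₀ τ hσ₀ hτ
    have : P τ := chain_prop P step γ hfac hchain σ₀ τ hhead hlast hPσ₀
    exact this v (hfτ hvf)
  · rintro k hk ⟨c, hc⟩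
    have hinj : Set.InjOn c σ₀ := injOn_of_proper hK hc hσ₀K
    have : (σ₀.image c).card = d + 1 := by
      rw [card_image_of_injOn hinj, hσ₀card]
    have hle : (σ₀.image c).card ≤ k := by
      simpa using card_le_card (subset_univ (σ₀.image c))
    omega
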